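/- For any T-term P and *-term Q, the unique T-*-decomposition of se(P ∧❛ Q) is (se(P)[T↦△], se(Q)). -/

import Mathlib

/-- Evaluation trees over a set `A` of atoms, with leaves `T` and `F`. -/
inductive ETree (A : Type) : Type
  | leafT : ETree A
  | leafF : ETree A
  | node : ETree A → A → ETree A → ETree A

namespace ETree

/-- Leaf replacement `X[T↦Y, F↦Z]`. -/
def repl {A : Type} : ETree A → ETree A → ETree A → ETree A
  | leafT, y, _ => y
  | leafF, _, z => z
  | node l a r, y, z => node (repl l y z) a (repl r y z)

end ETree

namespace ETree

/-- The tree contains the leaf `T`. -/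
def hasT {A : Type} : ETree A → Prop
  | leafT => True
  | leafF => False
  | node l _ r => hasT l ∨ hasT r

/-- The tree contains the leaf `F`. -/
def hasF {A : Type} : ETree A → Prop
  | leafT => False
  | leafF => True
  | node l _ r => hasF l ∨ hasF r

end ETree

namespace ETree

/-- Depth of an evaluation tree. -/
def depth {A : Type} : ETree A → ℕ
  | leafT => 0
  | leafF => 0
  | node l _ r => 1 + max (depth l) (depth r)

end ETree

/-- Closed sequential propositional statements over `A`:
`P ::= a | T | F | ¬P | P ∧❛ P | P ∨❛ P`. -/
inductive STerm (A : Type) : Type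
  | atom : A → STerm A
  | tt : STerm A
  | ff : STerm A
  | neg : STerm A → STerm A
  | and : STerm A → STerm A → STerm A
  | or : STerm A → STerm A → STerm A

/-- The short-circuit evaluation function `se : S_A → T_A`. -/
def se {A : Type} : STerm A → ETree A
  | .tt => .leafT
  | .ff => .leafF
  | .atom a => .node .leafT a .leafF
  | .neg P => (se P).repl .leafF .leafT
  | .and P Q => (se P).repl (se Q) .leafF
  | .or P Q => (se P).repl .leafT (se Q)

/-- T-terms: `P^T ::= T | (a ∧❛ P^T) ∨❛ P^T`. -/
inductive IsTTerm {A : Type} : STerm A → Prop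
  | tt : IsTTerm .tt
  | node (a : A) {P Q} : IsTTerm P → IsTTerm Q → IsTTerm (.or (.and (.atom a) P) Q)

/-- F-terms: `P^F ::= F | (a ∨❛ P^F) ∧❛ P^F`. -/
inductive IsFTerm {A : Type} : STerm A → Prop
  | ff : IsFTerm .ff
  | node (a : A) {P Q} : IsFTerm P → IsFTerm Q → IsFTerm (.and (.or (.atom a) P) Q)

/-- ℓ-terms: `P^ℓ ::= (a ∧❛ P^T) ∨❛ P^F | (¬a ∧❛ P^T) ∨❛ P^F`. -/
inductive IsLTerm {A : Type} : STerm A → Prop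
  | pos (a : A) {P Q} : IsTTerm P → IsFTerm Q → IsLTerm (.or (.and (.atom a) P) Q)
  | neg (a : A) {P Q} : IsTTerm P → IsFTerm Q → IsLTerm (.or (.and (.neg (.atom a)) P) Q)

mutual
/-- The category `P^c ::= P^ℓ | P^* ∧❛ P^d`. -/
inductive IsCTerm {A : Type} : STerm A → Prop
  | ell {P} : IsLTerm P → IsCTerm P
  | and {P Q} : IsStarTerm P → IsDTerm Q → IsCTerm (.and P Q)

/-- The category `P^d ::= P^ℓ | P^* ∨❛ P^c`. -/
inductive IsDTerm {A : Type} : STerm A → Prop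
  | ell {P} : IsLTerm P → IsDTerm P
  | or {P Q} : IsStarTerm P → IsCTerm Q → IsDTerm (.or P Q)

/-- *-terms: `P^* ::= P^c | P^d`. -/
inductive IsStarTerm {A : Type} : STerm A → Prop
  | c {P} : IsCTerm P → IsStarTerm P
  | d {P} : IsDTerm P → IsStarTerm P
end

/-- Binary trees over `A` with leaves in `{T, F, △}`. -/
inductive DTree (A : Type) : Type
  | leafT : DTree A
  | leafF : DTree A
  | leafD : DTree A
  | node : DTree A → A → DTree A → DTree A

namespace DTree

/-- `X[△↦Z]`: replace every `△`-leaf of `X` by the evaluation tree `Z`. -/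
def substD {A : Type} : DTree A → ETree A → ETree A
  | leafT, _ => .leafT
  | leafF, _ => .leafF
  | leafD, z => z
  | node l a r, z => .node (substD l z) a (substD r z)

/-- The tree contains the leaf `T`. -/
def hasT {A : Type} : DTree A → Prop
  | leafT => True
  | leafF => False
  | leafD => False
  | node l _ r => hasT l ∨ hasT r

/-- The tree contains the leaf `F`. -/
def hasF {A : Type} : DTree A → Prop
  | leafT => False
  | leafF => True
  | leafD => False
  | node l _ r => hasF l ∨ hasF r

/-- The tree contains the leaf `△`. -/
def hasD {A : Type} : DTree A → Prop
  | leafT => False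
  | leafF => False
  | leafD => True
  | node l _ r => hasD l ∨ hasD r

end DTree

namespace ETree

/-- `X[T↦△]`: replace every `T`-leaf by `△`. -/
def replTD {A : Type} : ETree A → DTree A
  | leafT => .leafD
  | leafF => .leafF
  | node l a r => .node (replTD l) a (replTD r)

/-- `X[F↦△]`: replace every `F`-leaf by `△`. -/
def replFD {A : Type} : ETree A → DTree A
  | leafT => .leafT
  | leafF => .leafD
  | node l a r => .node (replFD l) a (replFD r)

end ETree

/-- `(Y, Z)` is a candidate T-*-decomposition (ctsd) of `X`. -/
def IsCTSD {A : Type} (Y : DTree A) (Z : ETree A) (X : ETree A) : Prop :=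
  X = Y.substD Z ∧ ¬ Y.hasT ∧ ¬ Y.hasF ∧ Z.hasT ∧ Z.hasF ∧
    ¬ ∃ (U : DTree A) (V : ETree A),
        Z = U.substD V ∧ U.hasD ∧ U ≠ DTree.leafD ∧ ¬ U.hasT ∧ ¬ U.hasF

/-- `(Y, Z)` is a T-*-decomposition (tsd) of `X`: a ctsd such that no ctsd has a
second component of smaller depth. -/
def IsTSD {A : Type} (Y : DTree A) (Z : ETree A) (X : ETree A) : Prop :=
  IsCTSD Y Z X ∧ ∀ (Y' : DTree A) (Z' : ETree A), IsCTSD Y' Z' X → ¬ Z'.depth < Z.depth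

section AuxLemmas

variable {A : Type}

lemma etree_total : ∀ X : ETree A, X.hasT ∨ X.hasF := by
  intro X
  induction X with
  | leafT => exact Or.inl trivial
  | leafF => exact Or.inr trivial
  | node l a r ihl ihr =>
    rcases ihl with h | h
    · exact Or.inl (Or.inl h)
    · exact Or.inr (Or.inl h)

lemma dtree_hasD : ∀ U : DTree A, ¬ U.hasT → ¬ U.hasF → U.hasD := by
  intro U
  induction U with
  | leafT => intro h _; exact absurd trivial h
  | leafF => intro _ h; exact absurd trivial h
  | leafD => intro _ _; trivial
  | node l a r ihl ihr =>
    intro hT hF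
    simp only [DTree.hasT, DTree.hasF, DTree.hasD, not_or] at *
    exact Or.inl (ihl hT.1 hF.1)

lemma hasT_substD : ∀ (U : DTree A) (V : ETree A),
    (U.substD V).hasT ↔ U.hasT ∨ (U.hasD ∧ V.hasT) := by
  intro U V
  induction U with
  | leafT => simp [DTree.substD, DTree.hasT, DTree.hasD, ETree.hasT]
  | leafF => simp [DTree.substD, DTree.hasT, DTree.hasD, ETree.hasT]
  | leafD => simp [DTree.substD, DTree.hasT, DTree.hasD]
  | node l a r ihl ihr =>
    simp only [DTree.substD, DTree.hasT, DTree.hasD, ETree.hasT, ihl, ihr]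
    tauto

lemma hasF_substD : ∀ (U : DTree A) (V : ETree A),
    (U.substD V).hasF ↔ U.hasF ∨ (U.hasD ∧ V.hasF) := by
  intro U V
  induction U with
  | leafT => simp [DTree.substD, DTree.hasF, DTree.hasD, ETree.hasF]
  | leafF => simp [DTree.substD, DTree.hasF, DTree.hasD, ETree.hasF]
  | leafD => simp [DTree.substD, DTree.hasF, DTree.hasD]
  | node l a r ihl ihr =>
    simp only [DTree.substD, DTree.hasF, DTree.hasD, ETree.hasF, ihl, ihr]
    tauto

lemma hasT_repl : ∀ (X Y Z : ETree A),
    (X.repl Y Z).hasT ↔ (X.hasT ∧ Y.hasT) ∨ (X.hasF ∧ Z.hasT) := by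
  intro X Y Z
  induction X with
  | leafT => simp [ETree.repl, ETree.hasT, ETree.hasF]
  | leafF => simp [ETree.repl, ETree.hasT, ETree.hasF]
  | node l a r ihl ihr =>
    simp only [ETree.repl, ETree.hasT, ETree.hasF, ihl, ihr]
    tauto

lemma hasF_repl : ∀ (X Y Z : ETree A),
    (X.repl Y Z).hasF ↔ (X.hasT ∧ Y.hasF) ∨ (X.hasF ∧ Z.hasF) := by
  intro X Y Z
  induction X with
  | leafT => simp [ETree.repl, ETree.hasT, ETree.hasF]
  | leafF => simp [ETree.repl, ETree.hasT, ETree.hasF]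
  | node l a r ihl ihr =>
    simp only [ETree.repl, ETree.hasT, ETree.hasF, ihl, ihr]
    tauto

lemma replTD_not_hasT : ∀ p : ETree A, ¬ p.replTD.hasT := by
  intro p
  induction p with
  | leafT => simp [ETree.replTD, DTree.hasT]
  | leafF => simp [ETree.replTD, DTree.hasT]
  | node l a r ihl ihr => simp only [ETree.replTD, DTree.hasT, not_or]; exact ⟨ihl, ihr⟩

lemma replTD_hasF : ∀ p : ETree A, p.replTD.hasF ↔ p.hasF := by
  intro p
  induction p with
  | leafT => simp [ETree.replTD, DTree.hasF, ETree.hasF]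
  | leafF => simp [ETree.replTD, DTree.hasF, ETree.hasF]
  | node l a r ihl ihr => simp only [ETree.replTD, DTree.hasF, ETree.hasF, ihl, ihr]

lemma replTD_hasD : ∀ p : ETree A, p.replTD.hasD ↔ p.hasT := by
  intro p
  induction p with
  | leafT => simp [ETree.replTD, DTree.hasD, ETree.hasT]
  | leafF => simp [ETree.replTD, DTree.hasD, ETree.hasT]
  | node l a r ihl ihr => simp only [ETree.replTD, DTree.hasD, ETree.hasT, ihl, ihr]

lemma repl_F_eq_substD : ∀ (p z : ETree A), p.repl z .leafF = p.replTD.substD z := by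
  intro p z
  induction p with
  | leafT => rfl
  | leafF => rfl
  | node l a r ihl ihr => simp only [ETree.repl, ETree.replTD, DTree.substD, ihl, ihr]

lemma depth_le_replT : ∀ (p W : ETree A), p.hasT → W.depth ≤ (p.repl W .leafF).depth := by
  intro p W
  induction p with
  | leafT => intro _; exact le_refl _
  | leafF => intro h; exact absurd h id
  | node l a r ihl ihr =>
    intro h
    rcases h with h | h
    · calc W.depth ≤ (l.repl W .leafF).depth := ihl h
        _ ≤ 1 + max (l.repl W .leafF).depth (r.repl W .leafF).depth := by omega
        _ = ((ETree.node l a r).repl W .leafF).depth := rfl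
    · calc W.depth ≤ (r.repl W .leafF).depth := ihr h
        _ ≤ 1 + max (l.repl W .leafF).depth (r.repl W .leafF).depth := by omega
        _ = ((ETree.node l a r).repl W .leafF).depth := rfl

lemma depth_le_replF : ∀ (p W : ETree A), p.hasF → W.depth ≤ (p.repl .leafT W).depth := by
  intro p W
  induction p with
  | leafT => intro h; exact absurd h id
  | leafF => intro _; exact le_refl _
  | node l a r ihl ihr =>
    intro h
    rcases h with h | h
    · calc W.depth ≤ (l.repl .leafT W).depth := ihl h
        _ ≤ 1 + max (l.repl .leafT W).depth (r.repl .leafT W).depth := by omega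
        _ = ((ETree.node l a r).repl .leafT W).depth := rfl
    · calc W.depth ≤ (r.repl .leafT W).depth := ihr h
        _ ≤ 1 + max (l.repl .leafT W).depth (r.repl .leafT W).depth := by omega
        _ = ((ETree.node l a r).repl .leafT W).depth := rfl

lemma no_fix_replT {W : ETree A} (hWT : W.hasT) (ql qr : ETree A) (b : A)
    (h : W = ETree.node (ql.repl W .leafF) b (qr.repl W .leafF)) : False := by
  have hq : (ql.repl W .leafF).hasT ∨ (qr.repl W .leafF).hasT := by
    have hx := hWT
    rw [h] at hx
    exact hx
  have hdep : W.depth = 1 + max (ql.repl W .leafF).depth (qr.repl W .leafF).depth := by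
    conv_lhs => rw [h]
    rfl
  rcases hq with h1 | h1
  · rw [hasT_repl] at h1
    rcases h1 with ⟨h1, -⟩ | ⟨-, h1⟩
    · have := depth_le_replT ql W h1
      omega
    · exact h1
  · rw [hasT_repl] at h1
    rcases h1 with ⟨h1, -⟩ | ⟨-, h1⟩
    · have := depth_le_replT qr W h1
      omega
    · exact h1

lemma no_fix_replF {W : ETree A} (hWF : W.hasF) (ql qr : ETree A) (b : A)
    (h : W = ETree.node (ql.repl .leafT W) b (qr.repl .leafT W)) : False := by
  have hq : (ql.repl .leafT W).hasF ∨ (qr.repl .leafT W).hasF := by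
    have hx := hWF
    rw [h] at hx
    exact hx
  have hdep : W.depth = 1 + max (ql.repl .leafT W).depth (qr.repl .leafT W).depth := by
    conv_lhs => rw [h]
    rfl
  rcases hq with h1 | h1
  · rw [hasF_repl] at h1
    rcases h1 with ⟨-, h1⟩ | ⟨h1, -⟩
    · exact h1
    · have := depth_le_replF ql W h1
      omega
  · rw [hasF_repl] at h1
    rcases h1 with ⟨-, h1⟩ | ⟨h1, -⟩
    · exact h1
    · have := depth_le_replF qr W h1
      omega

lemma replT_inj {W : ETree A} (hWT : W.hasT) :
    ∀ p q : ETree A, p.repl W .leafF = q.repl W .leafF → p = q := by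
  intro p
  induction p with
  | leafT =>
    intro q h
    cases q with
    | leafT => rfl
    | leafF =>
      have h' : W = ETree.leafF := h
      rw [h'] at hWT
      exact hWT.elim
    | node ql b qr =>
      have h' : W = ETree.node (ql.repl W .leafF) b (qr.repl W .leafF) := h
      exact (no_fix_replT hWT ql qr b h').elim
  | leafF =>
    intro q h
    cases q with
    | leafT =>
      have h' : ETree.leafF = W := h
      rw [← h'] at hWT
      exact hWT.elim
    | leafF => rfl
    | node ql b qr =>
      have h' : ETree.leafF = ETree.node (ql.repl W .leafF) b (qr.repl W .leafF) := h
      exact nomatch h'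
  | node pl b pr ihl ihr =>
    intro q h
    cases q with
    | leafT =>
      have h' : W = ETree.node (pl.repl W .leafF) b (pr.repl W .leafF) := h.symm
      exact (no_fix_replT hWT pl pr b h').elim
    | leafF =>
      have h' : ETree.node (pl.repl W .leafF) b (pr.repl W .leafF) = ETree.leafF := h
      exact nomatch h'
    | node ql c qr =>
      have h' : ETree.node (pl.repl W .leafF) b (pr.repl W .leafF)
          = ETree.node (ql.repl W .leafF) c (qr.repl W .leafF) := h
      injection h' with h1 h2 h3
      rw [ihl ql h1, ihr qr h3, h2]

lemma replF_inj {W : ETree A} (hWF : W.hasF) :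
    ∀ p q : ETree A, p.repl .leafT W = q.repl .leafT W → p = q := by
  intro p
  induction p with
  | leafF =>
    intro q h
    cases q with
    | leafF => rfl
    | leafT =>
      have h' : W = ETree.leafT := h
      rw [h'] at hWF
      exact hWF.elim
    | node ql b qr =>
      have h' : W = ETree.node (ql.repl .leafT W) b (qr.repl .leafT W) := h
      exact (no_fix_replF hWF ql qr b h').elim
  | leafT =>
    intro q h
    cases q with
    | leafF =>
      have h' : ETree.leafT = W := h
      rw [← h'] at hWF
      exact hWF.elim
    | leafT => rfl
    | node ql b qr =>
      have h' : ETree.leafT = ETree.node (ql.repl .leafT W) b (qr.repl .leafT W) := h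
      exact nomatch h'
  | node pl b pr ihl ihr =>
    intro q h
    cases q with
    | leafF =>
      have h' : W = ETree.node (pl.repl .leafT W) b (pr.repl .leafT W) := h.symm
      exact (no_fix_replF hWF pl pr b h').elim
    | leafT =>
      have h' : ETree.node (pl.repl .leafT W) b (pr.repl .leafT W) = ETree.leafT := h
      exact nomatch h'
    | node ql c qr =>
      have h' : ETree.node (pl.repl .leafT W) b (pr.repl .leafT W)
          = ETree.node (ql.repl .leafT W) c (qr.repl .leafT W) := h
      injection h' with h1 h2 h3
      rw [ihl ql h1, ihr qr h3, h2]

/-- `Z` admits no nontrivial shape decomposition. -/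
def ETPrime (Z : ETree A) : Prop :=
  ¬ ∃ (U : DTree A) (V : ETree A),
      Z = U.substD V ∧ U.hasD ∧ U ≠ DTree.leafD ∧ ¬ U.hasT ∧ ¬ U.hasF

lemma factor_replT (W : ETree A) (hWT : W.hasT) (hWp : ETPrime W) :
    ∀ (u : DTree A), ¬ u.hasT → ¬ u.hasF →
    ∀ (p V : ETree A), p.repl W .leafF = u.substD V →
    ∃ V', p = u.substD V' ∧ V'.repl W .leafF = V := by
  intro u
  induction u with
  | leafT => intro h; exact absurd trivial h
  | leafF => intro _ h; exact absurd trivial h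
  | leafD => intro _ _ p V h; exact ⟨p, rfl, h⟩
  | node l a r ihl ihr =>
    intro hT hF p V h
    simp only [DTree.hasT, not_or] at hT
    simp only [DTree.hasF, not_or] at hF
    cases p with
    | leafT =>
      exfalso
      exact hWp ⟨.node l a r, V, h, Or.inl (dtree_hasD l hT.1 hF.1), nofun,
        by simp [DTree.hasT]; exact ⟨hT.1, hT.2⟩, by simp [DTree.hasF]; exact ⟨hF.1, hF.2⟩⟩
    | leafF => exact absurd h (by simp [ETree.repl, DTree.substD])
    | node pl b pr =>
      simp only [ETree.repl, DTree.substD] at h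
      injection h with h1 h2 h3
      obtain ⟨V1, hp1, hv1⟩ := ihl hT.1 hF.1 pl V h1
      obtain ⟨V2, hp2, hv2⟩ := ihr hT.2 hF.2 pr V h3
      have hVV : V1 = V2 := replT_inj hWT _ _ (hv1.trans hv2.symm)
      refine ⟨V1, ?_, hv1⟩
      simp only [DTree.substD]
      rw [← hp1, h2, hVV, ← hp2]

lemma factor_replF (W : ETree A) (hWF : W.hasF) (hWp : ETPrime W) :
    ∀ (u : DTree A), ¬ u.hasT → ¬ u.hasF →
    ∀ (p V : ETree A), p.repl .leafT W = u.substD V →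
    ∃ V', p = u.substD V' ∧ V'.repl .leafT W = V := by
  intro u
  induction u with
  | leafT => intro h; exact absurd trivial h
  | leafF => intro _ h; exact absurd trivial h
  | leafD => intro _ _ p V h; exact ⟨p, rfl, h⟩
  | node l a r ihl ihr =>
    intro hT hF p V h
    simp only [DTree.hasT, not_or] at hT
    simp only [DTree.hasF, not_or] at hF
    cases p with
    | leafF =>
      exfalso
      exact hWp ⟨.node l a r, V, h, Or.inl (dtree_hasD l hT.1 hF.1), nofun,
        by simp [DTree.hasT]; exact ⟨hT.1, hT.2⟩, by simp [DTree.hasF]; exact ⟨hF.1, hF.2⟩⟩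
    | leafT => exact absurd h (by simp [ETree.repl, DTree.substD])
    | node pl b pr =>
      simp only [ETree.repl, DTree.substD] at h
      injection h with h1 h2 h3
      obtain ⟨V1, hp1, hv1⟩ := ihl hT.1 hF.1 pl V h1
      obtain ⟨V2, hp2, hv2⟩ := ihr hT.2 hF.2 pr V h3
      have hVV : V1 = V2 := replF_inj hWF _ _ (hv1.trans hv2.symm)
      refine ⟨V1, ?_, hv1⟩
      simp only [DTree.substD]
      rw [← hp1, h2, hVV, ← hp2]

lemma tterm_noF {P : STerm A} (h : IsTTerm P) : ¬ (se P).hasF := by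
  induction h with
  | tt => exact id
  | node a hP hQ ihP ihQ =>
    show ¬ ETree.hasF _
    simp only [se]
    rw [hasF_repl, hasF_repl, hasT_repl]
    simp only [ETree.hasT, ETree.hasF]
    tauto

lemma fterm_noT {P : STerm A} (h : IsFTerm P) : ¬ (se P).hasT := by
  induction h with
  | ff => exact id
  | node a hP hQ ihP ihQ =>
    show ¬ ETree.hasT _
    simp only [se]
    rw [hasT_repl, hasT_repl, hasF_repl]
    simp only [ETree.hasT, ETree.hasF]
    tauto

end AuxLemmas
section LTermLemmas

variable {A : Type}

lemma prime_of_node_pos {L R : ETree A} {a : A} (h1 : ¬ L.hasF) (h2 : ¬ R.hasT) :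
    ETPrime (ETree.node L a R) := by
  rintro ⟨U, V, hEq, hD, hne, hnT, hnF⟩
  cases U with
  | leafT => exact hnT trivial
  | leafF => exact hnF trivial
  | leafD => exact hne rfl
  | node u1 b u2 =>
    simp only [DTree.substD] at hEq
    injection hEq with e1 e2 e3
    simp only [DTree.hasT, not_or] at hnT
    simp only [DTree.hasF, not_or] at hnF
    have d1 : u1.hasD := dtree_hasD u1 hnT.1 hnF.1
    have d2 : u2.hasD := dtree_hasD u2 hnT.2 hnF.2
    have hVF : ¬ V.hasF := by
      intro hv
      apply h1
      rw [e1, hasF_substD]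
      exact Or.inr ⟨d1, hv⟩
    have hVT : ¬ V.hasT := by
      intro hv
      apply h2
      rw [e3, hasT_substD]
      exact Or.inr ⟨d2, hv⟩
    rcases etree_total V with h | h
    exacts [hVT h, hVF h]

lemma prime_of_node_neg {L R : ETree A} {a : A} (h1 : ¬ L.hasT) (h2 : ¬ R.hasF) :
    ETPrime (ETree.node L a R) := by
  rintro ⟨U, V, hEq, hD, hne, hnT, hnF⟩
  cases U with
  | leafT => exact hnT trivial
  | leafF => exact hnF trivial
  | leafD => exact hne rfl
  | node u1 b u2 =>
    simp only [DTree.substD] at hEq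
    injection hEq with e1 e2 e3
    simp only [DTree.hasT, not_or] at hnT
    simp only [DTree.hasF, not_or] at hnF
    have d1 : u1.hasD := dtree_hasD u1 hnT.1 hnF.1
    have d2 : u2.hasD := dtree_hasD u2 hnT.2 hnF.2
    have hVT : ¬ V.hasT := by
      intro hv
      apply h1
      rw [e1, hasT_substD]
      exact Or.inr ⟨d1, hv⟩
    have hVF : ¬ V.hasF := by
      intro hv
      apply h2
      rw [e3, hasF_substD]
      exact Or.inr ⟨d2, hv⟩
    rcases etree_total V with h | h
    exacts [hVT h, hVF h]

lemma ell_good {P : STerm A} (h : IsLTerm P) :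
    ETPrime (se P) ∧ (se P).hasT ∧ (se P).hasF := by
  cases h with
  | pos a hT hF =>
    rename_i PT PF
    have haT := tterm_noF hT
    have haF := fterm_noT hF
    have hX : se (STerm.or (STerm.and (STerm.atom a) PT) PF)
        = ETree.node ((se PT).repl .leafT (se PF)) a (se PF) := rfl
    have hLnF : ¬ ((se PT).repl .leafT (se PF)).hasF := by
      rw [hasF_repl]
      rintro (⟨-, h2⟩ | ⟨h1, -⟩)
      · exact h2
      · exact haT h1
    have hLT : ((se PT).repl .leafT (se PF)).hasT := by
      rw [hasT_repl]
      exact Or.inl ⟨(etree_total _).resolve_right haT, trivial⟩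
    have hRF : (se PF).hasF := (etree_total _).resolve_left haF
    rw [hX]
    exact ⟨prime_of_node_pos hLnF haF, Or.inl hLT, Or.inr hRF⟩
  | neg a hT hF =>
    rename_i PT PF
    have haT := tterm_noF hT
    have haF := fterm_noT hF
    have hX : se (STerm.or (STerm.and (STerm.neg (STerm.atom a)) PT) PF)
        = ETree.node (se PF) a ((se PT).repl .leafT (se PF)) := rfl
    have hRnF : ¬ ((se PT).repl .leafT (se PF)).hasF := by
      rw [hasF_repl]
      rintro (⟨-, h2⟩ | ⟨h1, -⟩)
      · exact h2
      · exact haT h1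
    have hRT : ((se PT).repl .leafT (se PF)).hasT := by
      rw [hasT_repl]
      exact Or.inl ⟨(etree_total _).resolve_right haT, trivial⟩
    have hLF : (se PF).hasF := (etree_total _).resolve_left haF
    rw [hX]
    exact ⟨prime_of_node_neg haF hRnF, Or.inr hRT, Or.inl hLF⟩

end LTermLemmas
section MainLemmas

variable {A : Type}

lemma star_good : ∀ Q : STerm A, IsStarTerm Q → ETPrime (se Q) ∧ (se Q).hasT ∧ (se Q).hasF := by
  intro Q
  induction Q with
  | atom a =>
    intro h
    exfalso
    cases h with
    | c hc => cases hc with | ell hl => cases hl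
    | d hd => cases hd with | ell hl => cases hl
  | tt =>
    intro h
    exfalso
    cases h with
    | c hc => cases hc with | ell hl => cases hl
    | d hd => cases hd with | ell hl => cases hl
  | ff =>
    intro h
    exfalso
    cases h with
    | c hc => cases hc with | ell hl => cases hl
    | d hd => cases hd with | ell hl => cases hl
  | neg P ih =>
    intro h
    exfalso
    cases h with
    | c hc => cases hc with | ell hl => cases hl
    | d hd => cases hd with | ell hl => cases hl
  | and P1 P2 ih1 ih2 =>
    intro h
    have hPQ : IsStarTerm P1 ∧ IsDTerm P2 := by
      cases h with
      | c hc =>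
        cases hc with
        | ell hl => cases hl
        | and h1 h2 => exact ⟨h1, h2⟩
      | d hd => cases hd with | ell hl => cases hl
    obtain ⟨p1, t1, f1⟩ := ih1 hPQ.1
    obtain ⟨p2, t2, f2⟩ := ih2 (IsStarTerm.d hPQ.2)
    have hX : se (STerm.and P1 P2) = (se P1).repl (se P2) .leafF := rfl
    refine ⟨?_, ?_, ?_⟩
    · rintro ⟨U, V, hEq, hD, hne, hnT, hnF⟩
      rw [hX] at hEq
      obtain ⟨V', hP1eq, -⟩ := factor_replT (se P2) t2 p2 U hnT hnF (se P1) V hEq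
      exact p1 ⟨U, V', hP1eq, hD, hne, hnT, hnF⟩
    · rw [hX, hasT_repl]; exact Or.inl ⟨t1, t2⟩
    · rw [hX, hasF_repl]; exact Or.inr ⟨f1, trivial⟩
  | or P1 P2 ih1 ih2 =>
    intro h
    -- three possible sources: ℓ-term (pos/neg) or ∗ ∨ c
    have hcases : IsLTerm (STerm.or P1 P2) ∨ (IsStarTerm P1 ∧ IsCTerm P2) := by
      cases h with
      | c hc => cases hc with | ell hl => exact Or.inl hl
      | d hd =>
        cases hd with
        | ell hl => exact Or.inl hl
        | or h1 h2 => exact Or.inr ⟨h1, h2⟩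
    rcases hcases with hl | ⟨h1, h2⟩
    · exact ell_good hl
    · obtain ⟨p1, t1, f1⟩ := ih1 h1
      obtain ⟨p2, t2, f2⟩ := ih2 (IsStarTerm.c h2)
      have hX : se (STerm.or P1 P2) = (se P1).repl .leafT (se P2) := rfl
      refine ⟨?_, ?_, ?_⟩
      · rintro ⟨U, V, hEq, hD, hne, hnT, hnF⟩
        rw [hX] at hEq
        obtain ⟨V', hP1eq, -⟩ := factor_replF (se P2) f2 p2 U hnT hnF (se P1) V hEq
        exact p1 ⟨U, V', hP1eq, hD, hne, hnT, hnF⟩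
      · rw [hX, hasT_repl]; exact Or.inl ⟨t1, trivial⟩
      · rw [hX, hasF_repl]; exact Or.inr ⟨f1, f2⟩

end MainLemmas
section FinalLemmas

variable {A : Type}

lemma ctsd_eq (Z : ETree A) (hZp : ETPrime Z) :
    ∀ (Y' : DTree A), ¬ Y'.hasT → ¬ Y'.hasF →
    ∀ (W : ETree A), ¬ W.hasF →
    ∀ (Z' : ETree A), ETPrime Z' →
      W.repl Z .leafF = Y'.substD Z' → Y' = W.replTD ∧ Z' = Z := by
  intro Y'
  induction Y' with
  | leafT => intro h; exact absurd trivial h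
  | leafF => intro _ h; exact absurd trivial h
  | leafD =>
    intro _ _ W hWF Z' hZ'p hEq
    cases W with
    | leafT => exact ⟨rfl, hEq.symm⟩
    | leafF => exact absurd trivial hWF
    | node l b r =>
      exfalso
      apply hZ'p
      refine ⟨(ETree.node l b r).replTD, Z, ?_, ?_, ?_, ?_, ?_⟩
      · have hEq' : (ETree.node l b r).repl Z .leafF = Z' := hEq
        rw [← hEq']
        exact repl_F_eq_substD _ _
      · rw [replTD_hasD]
        exact (etree_total _).resolve_right hWF
      · simp only [ETree.replTD]
        exact nofun
      · exact replTD_not_hasT _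
      · rw [replTD_hasF]; exact hWF
  | node l a r ihl ihr =>
    intro hT hF W hWF Z' hZ'p hEq
    simp only [DTree.hasT, not_or] at hT
    simp only [DTree.hasF, not_or] at hF
    cases W with
    | leafT =>
      exfalso
      apply hZp
      exact ⟨DTree.node l a r, Z', hEq,
        Or.inl (dtree_hasD l hT.1 hF.1), nofun,
        by simp only [DTree.hasT, not_or]; exact hT,
        by simp only [DTree.hasF, not_or]; exact hF⟩
    | leafF => exact absurd trivial hWF
    | node wl b wr =>
      have hWFl : ¬ (ETree.hasF wl) := fun h => hWF (Or.inl h)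
      have hWFr : ¬ (ETree.hasF wr) := fun h => hWF (Or.inr h)
      simp only [ETree.repl, DTree.substD] at hEq
      injection hEq with h1 h2 h3
      obtain ⟨e1, eZ⟩ := ihl hT.1 hF.1 wl hWFl Z' hZ'p h1
      obtain ⟨e2, -⟩ := ihr hT.2 hF.2 wr hWFr Z' hZ'p h3
      refine ⟨?_, eZ⟩
      simp only [ETree.replTD]
      rw [e1, e2, h2]

end FinalLemmas

/-- For a T-term `P` and a *-term `Q`, the unique tsd of `se(P ∧❛ Q)` is
`(se(P)[T↦△], se(Q))`. -/
theorem tsd_unique {A : Type} [Nonempty A] (P Q : STerm A)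
    (hP : IsTTerm P) (hQ : IsStarTerm Q) :
    ∀ (Y : DTree A) (Z : ETree A),
      IsTSD Y Z (se (.and P Q)) ↔ Y = (se P).replTD ∧ Z = se Q := by
  intro Y Z
  have hPF : ¬ (se P).hasF := tterm_noF hP
  obtain ⟨hQp, hQT, hQF⟩ := star_good Q hQ
  have hX : se (STerm.and P Q) = (se P).repl (se Q) .leafF := rfl
  constructor
  · rintro ⟨⟨hEq, hYT, hYF, -, -, hZp⟩, -⟩
    have hEq' : (se P).repl (se Q) .leafF = Y.substD Z := by rw [← hX]; exact hEq
    have := ctsd_eq (se Q) hQp Y hYT hYF (se P) hPF Z hZp hEq'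
    exact ⟨this.1, this.2⟩
  · rintro ⟨rfl, rfl⟩
    constructor
    · refine ⟨?_, replTD_not_hasT _, ?_, hQT, hQF, hQp⟩
      · rw [hX]
        exact repl_F_eq_substD _ _
      · rw [replTD_hasF]
        exact hPF
    · rintro Y' Z' ⟨hEq, hYT, hYF, -, -, hZp⟩
      have hEq' : (se P).repl (se Q) .leafF = Y'.substD Z' := by rw [← hX]; exact hEq
      have := ctsd_eq (se Q) hQp Y' hYT hYF (se P) hPF Z' hZp hEq'
      rw [this.2]
      exact lt_irrefl _
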